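/- Let m ≥ 1 be an integer. There exists a constant K > 0 such that for every integer N ≥ m there exist complex coefficients C_{N,m,ℓ,j}, indexed by 0 ≤ ℓ ≤ m−1 and 0 ≤ j ≤ m−ℓ, independent of α, with |C_{N,m,ℓ,j}| ≤ K/N, such that for every α ∈ 𝒜 = {α ∈ ℂ⁴ : |Re α| = |Im α| = 1, Re α · Im α = 0} and every p ∈ ℝ³ the following identity holds for F_N(p) = (2/(|p|²+1))² (α·ω(p))^N: ((N+1)^{−1} L̃₃)^m F_N(p) = (−i)^m [ (α₁p₂ − α₂p₁)^m + Q_{α,m}(p;N) ] · (2/(|p|²+1))^{m+2} · (α·ω(p))^{N−m}, where Q_{α,m}(p;N) = Σ_{ℓ=0}^{m−1} Σ_{j=0}^{m−ℓ} C_{N,m,ℓ,j} (α₁p₂ − α₂p₁)^j (α₁p₁ + α₂p₂)^{m−ℓ−j} ((|p|²+1)/2)^ℓ (α·ω(p))^ℓ. -/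

import Mathlib

/-- `|p|²` on `Fin 3 → ℝ`. -/
noncomputable def normSq3 (p : Fin 3 → ℝ) : ℝ := p 0 ^ 2 + p 1 ^ 2 + p 2 ^ 2

/-- The inverse stereographic projection `ω : ℝ³ → ℝ⁴`. -/
noncomputable def stereoInv (p : Fin 3 → ℝ) : Fin 4 → ℝ :=
  ![2 * p 0 / (normSq3 p + 1), 2 * p 1 / (normSq3 p + 1), 2 * p 2 / (normSq3 p + 1),
    (normSq3 p - 1) / (normSq3 p + 1)]

/-- `α·ω(p) = Σⱼ αⱼ ωⱼ(p)` (bilinear, no conjugation). -/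
noncomputable def adotom (α : Fin 4 → ℂ) (p : Fin 3 → ℝ) : ℂ :=
  ∑ j, α j * (stereoInv p j : ℂ)

/-- The angular momentum operator in momentum space:
`(L̃₃ g)(p) = −i(p₂ ∂g/∂p₁(p) − p₁ ∂g/∂p₂(p))`. -/
noncomputable def L3tilde (g : (Fin 3 → ℝ) → ℂ) (p : Fin 3 → ℝ) : ℂ :=
  -Complex.I * ((p 1 : ℂ) * fderiv ℝ g p (Pi.single 0 1)
    - (p 0 : ℂ) * fderiv ℝ g p (Pi.single 1 1))

/-- Membership in `𝒜 = {α ∈ ℂ⁴ : |Re α| = |Im α| = 1, Re α · Im α = 0}`. -/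
def memA (α : Fin 4 → ℂ) : Prop :=
  (∑ j, (α j).re ^ 2) = 1 ∧ (∑ j, (α j).im ^ 2) = 1 ∧ (∑ j, (α j).re * (α j).im) = 0

namespace S11

/-- complex power rule for fderiv over ℝ -/
lemma cnpow {E : Type*} [NormedAddCommGroup E] [NormedSpace ℝ E]
    {f : E → ℂ} {f' : E →L[ℝ] ℂ} {x : E} (h : HasFDerivAt f f' x) (n : ℕ) :
    HasFDerivAt (fun y => f y ^ n) (((n : ℂ) * f x ^ (n - 1)) • f') x := by
  induction n with
  | zero =>
      have h0 : (((0 : ℕ) : ℂ) * f x ^ (0 - 1)) • f' = 0 := by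
        simp only [Nat.cast_zero, zero_mul]
        exact zero_smul ℂ f'
      rw [h0]
      simp only [pow_zero]
      exact hasFDerivAt_const (1 : ℂ) x
  | succ n ih =>
      have h2 := ih.fun_mul h
      have hfun : (fun y => f y ^ n * f y) = fun y => f y ^ (n + 1) := by
        funext y; rw [pow_succ]
      rw [hfun] at h2
      have hclm : f x ^ n • f' + f x • ((n : ℂ) * f x ^ (n - 1)) • f'
          = ((((n : ℕ) + 1 : ℕ) : ℂ) * f x ^ (n + 1 - 1)) • f' := by
        apply ContinuousLinearMap.ext
        intro v
        simp only [ContinuousLinearMap.add_apply, ContinuousLinearMap.coe_smul',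
          Pi.smul_apply, smul_eq_mul, Nat.add_sub_cancel]
        cases n with
        | zero => simp
        | succ n =>
            simp only [Nat.add_sub_cancel]
            push_cast
            ring
      rw [hclm] at h2
      exact h2

noncomputable def cpr (i : Fin 3) : (Fin 3 → ℝ) →L[ℝ] ℂ :=
  Complex.ofRealCLM.comp (ContinuousLinearMap.proj i)

lemma hasFDerivAt_coord (p : Fin 3 → ℝ) (i : Fin 3) :
    HasFDerivAt (fun q : Fin 3 → ℝ => ((q i : ℝ) : ℂ)) (cpr i) p :=
  (Complex.ofRealCLM.hasFDerivAt).comp p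
    ((ContinuousLinearMap.proj i : (Fin 3 → ℝ) →L[ℝ] ℝ).hasFDerivAt)

lemma cpr_apply (i j : Fin 3) : (cpr i) (Pi.single j (1:ℝ)) = if i = j then 1 else 0 := by
  simp [cpr, Pi.single_apply]
  split <;> simp

noncomputable def nC (p : Fin 3 → ℝ) : ℂ := ((normSq3 p : ℝ) : ℂ)

noncomputable def Dn (p : Fin 3 → ℝ) : (Fin 3 → ℝ) →L[ℝ] ℂ :=
  (2 * (p 0 : ℂ)) • cpr 0 + (2 * (p 1 : ℂ)) • cpr 1 + (2 * (p 2 : ℂ)) • cpr 2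

lemma Dn_apply (p : Fin 3 → ℝ) (j : Fin 3) :
    Dn p (Pi.single j (1:ℝ)) = 2 * (p j : ℂ) := by
  fin_cases j <;> simp [Dn, cpr_apply]

lemma hasFDerivAt_nC (p : Fin 3 → ℝ) : HasFDerivAt nC (Dn p) p := by
  have hfun : nC = fun q : Fin 3 → ℝ =>
      ((q 0 : ℝ) : ℂ) * ((q 0 : ℝ) : ℂ) + ((q 1 : ℝ) : ℂ) * ((q 1 : ℝ) : ℂ)
        + ((q 2 : ℝ) : ℂ) * ((q 2 : ℝ) : ℂ) := by
    funext q; unfold nC normSq3; push_cast; ring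
  rw [hfun]
  have h0 := hasFDerivAt_coord p 0
  have h1 := hasFDerivAt_coord p 1
  have h2 := hasFDerivAt_coord p 2
  have := ((h0.fun_mul h0).fun_add (h1.fun_mul h1)).fun_add (h2.fun_mul h2)
  refine this.congr_fderiv ?_
  unfold Dn
  module


noncomputable def rhoC (p : Fin 3 → ℝ) : ℂ := 2 / (nC p + 1)

lemma normSq3_nonneg (p : Fin 3 → ℝ) : 0 ≤ normSq3 p := by
  unfold normSq3; positivity

lemma den_ne (p : Fin 3 → ℝ) : nC p + 1 ≠ 0 := by
  have h : nC p + 1 = ((normSq3 p + 1 : ℝ) : ℂ) := by unfold nC; push_cast; ring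
  rw [h, Complex.ofReal_ne_zero]
  have := normSq3_nonneg p
  linarith

noncomputable def DR (p : Fin 3 → ℝ) : (Fin 3 → ℝ) →L[ℝ] ℂ :=
  (2 * -((nC p + 1) ^ 2)⁻¹) • Dn p

lemma hasFDerivAt_inv_den (p : Fin 3 → ℝ) :
    HasFDerivAt (fun q => (nC q + 1)⁻¹) ((-((nC p + 1) ^ 2)⁻¹) • Dn p) p :=
  (hasDerivAt_inv (den_ne p)).comp_hasFDerivAt p ((hasFDerivAt_nC p).add_const 1)

lemma hasFDerivAt_rhoC (p : Fin 3 → ℝ) : HasFDerivAt rhoC (DR p) p := by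
  have hfun : rhoC = fun q => 2 * (nC q + 1)⁻¹ := by
    funext q; rw [rhoC, div_eq_mul_inv]
  rw [hfun]
  have h := (hasFDerivAt_inv_den p).const_mul (2 : ℂ)
  rwa [smul_smul] at h

noncomputable def NumF (α : Fin 4 → ℂ) (p : Fin 3 → ℝ) : ℂ :=
  2 * α 0 * (p 0 : ℂ) + 2 * α 1 * (p 1 : ℂ) + 2 * α 2 * (p 2 : ℂ) + α 3 * (nC p - 1)

noncomputable def DNum (α : Fin 4 → ℂ) (p : Fin 3 → ℝ) : (Fin 3 → ℝ) →L[ℝ] ℂ :=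
  (2 * α 0) • cpr 0 + (2 * α 1) • cpr 1 + (2 * α 2) • cpr 2 + α 3 • Dn p

lemma hasFDerivAt_NumF (α : Fin 4 → ℂ) (p : Fin 3 → ℝ) :
    HasFDerivAt (NumF α) (DNum α p) p := by
  unfold NumF DNum
  exact ((((hasFDerivAt_coord p 0).const_mul (2 * α 0)).add
    ((hasFDerivAt_coord p 1).const_mul (2 * α 1))).add
    ((hasFDerivAt_coord p 2).const_mul (2 * α 2))).add
    (((hasFDerivAt_nC p).sub_const 1).const_mul (α 3))

lemma adotom_eq (α : Fin 4 → ℂ) (p : Fin 3 → ℝ) :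
    adotom α p = NumF α p / (nC p + 1) := by
  have h0 : ((normSq3 p + 1 : ℝ) : ℂ) ≠ 0 := by
    rw [Complex.ofReal_ne_zero]; have := normSq3_nonneg p; linarith
  have h1 : (normSq3 p + 1 : ℝ) ≠ 0 := by have := normSq3_nonneg p; linarith
  unfold adotom stereoInv NumF nC
  rw [Fin.sum_univ_four]
  simp only [Matrix.cons_val_zero, Matrix.cons_val_one, Matrix.head_cons,
    Matrix.cons_val_two, Matrix.tail_cons, Matrix.cons_val_three]
  push_cast
  field_simp

noncomputable def DW (α : Fin 4 → ℂ) (p : Fin 3 → ℝ) : (Fin 3 → ℝ) →L[ℝ] ℂ :=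
  NumF α p • ((-((nC p + 1) ^ 2)⁻¹) • Dn p) + (nC p + 1)⁻¹ • DNum α p

lemma hasFDerivAt_adotom (α : Fin 4 → ℂ) (p : Fin 3 → ℝ) :
    HasFDerivAt (adotom α) (DW α p) p := by
  have hfun : adotom α = fun q => NumF α q * (nC q + 1)⁻¹ := by
    funext q; rw [adotom_eq, div_eq_mul_inv]
  rw [hfun]
  exact (hasFDerivAt_NumF α p).mul (hasFDerivAt_inv_den p)

noncomputable def BF (α : Fin 4 → ℂ) (p : Fin 3 → ℝ) : ℂ := α 0 * (p 1 : ℂ) - α 1 * (p 0 : ℂ)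
noncomputable def AF (α : Fin 4 → ℂ) (p : Fin 3 → ℝ) : ℂ := α 0 * (p 0 : ℂ) + α 1 * (p 1 : ℂ)

lemma hasFDerivAt_BF (α : Fin 4 → ℂ) (p : Fin 3 → ℝ) :
    HasFDerivAt (BF α) (α 0 • cpr 1 - α 1 • cpr 0) p :=
  ((hasFDerivAt_coord p 1).const_mul (α 0)).sub ((hasFDerivAt_coord p 0).const_mul (α 1))

lemma hasFDerivAt_AF (α : Fin 4 → ℂ) (p : Fin 3 → ℝ) :
    HasFDerivAt (AF α) (α 0 • cpr 0 + α 1 • cpr 1) p :=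
  ((hasFDerivAt_coord p 0).const_mul (α 0)).add ((hasFDerivAt_coord p 1).const_mul (α 1))

noncomputable def Tf (α : Fin 4 → ℂ) (k a b s : ℕ) (p : Fin 3 → ℝ) : ℂ :=
  rhoC p ^ k * adotom α p ^ a * BF α p ^ b * AF α p ^ s

lemma differentiable_Tf (α : Fin 4 → ℂ) (k a b s : ℕ) : Differentiable ℝ (Tf α k a b s) :=
  fun p => (((((cnpow (hasFDerivAt_rhoC p) k).mul
    (cnpow (hasFDerivAt_adotom α p) a)).mul
    (cnpow (hasFDerivAt_BF α p) b)).mul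
    (cnpow (hasFDerivAt_AF α p) s))).differentiableAt

lemma L3tilde_Tf (α : Fin 4 → ℂ) (k a b s : ℕ) (p : Fin 3 → ℝ) :
    L3tilde (Tf α k a b s) p = -Complex.I *
      ((a : ℂ) * Tf α (k+1) (a-1) (b+1) s p - (b : ℂ) * Tf α k a (b-1) (s+1) p
        + (s : ℂ) * Tf α k a (b+1) (s-1) p) := by
  have hD := (((cnpow (hasFDerivAt_rhoC p) k).fun_mul
    (cnpow (hasFDerivAt_adotom α p) a)).fun_mul
    (cnpow (hasFDerivAt_BF α p) b)).fun_mul (cnpow (hasFDerivAt_AF α p) s)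
  rw [L3tilde, show Tf α k a b s = fun q =>
      rhoC q ^ k * adotom α q ^ a * BF α q ^ b * AF α q ^ s from rfl, hD.fderiv]
  simp only [ContinuousLinearMap.add_apply, ContinuousLinearMap.coe_smul', Pi.smul_apply,
    smul_eq_mul, ContinuousLinearMap.coe_sub', Pi.sub_apply, Dn_apply, cpr_apply,
    DW, DR, DNum]
  norm_num [Fin.ext_iff]
  simp only [Tf, BF, AF, rhoC, adotom_eq]
  ring


noncomputable def coefC (N : ℕ) : ℕ → ℕ → ℕ → ℂ
  | 0, ℓ, j => if ℓ = 0 ∧ j = 0 then 1 else 0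
  | (m+1), ℓ, j =>
      (((N - m + ℓ : ℕ) : ℂ) * (if 1 ≤ j then coefC N m ℓ (j-1) else 0)
        - ((j : ℂ) + 1) * (if 1 ≤ ℓ then coefC N m (ℓ-1) (j+1) else 0)
        + ((m - (ℓ-1) - (j-1) : ℕ) : ℂ) * (if 1 ≤ ℓ ∧ 1 ≤ j then coefC N m (ℓ-1) (j-1) else 0))
        / ((N : ℂ) + 1)

lemma coefC_support (N : ℕ) : ∀ m ℓ j : ℕ, m < ℓ + j → coefC N m ℓ j = 0 := by
  intro m
  induction m with
  | zero =>
      intro ℓ j h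
      simp only [coefC, ite_eq_right_iff, and_imp]
      intro h1 h2; omega
  | succ m ih =>
      intro ℓ j h
      have p1 : (if 1 ≤ j then coefC N m ℓ (j-1) else 0) = 0 := by
        split_ifs with h1
        · exact ih ℓ (j-1) (by omega)
        · rfl
      have p2 : (if 1 ≤ ℓ then coefC N m (ℓ-1) (j+1) else 0) = 0 := by
        split_ifs with h1
        · exact ih (ℓ-1) (j+1) (by omega)
        · rfl
      have p3 : ((m - (ℓ-1) - (j-1) : ℕ) : ℂ) = 0 ∨
          (if 1 ≤ ℓ ∧ 1 ≤ j then coefC N m (ℓ-1) (j-1) else 0) = 0 := by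
        by_cases hc : 1 ≤ ℓ ∧ 1 ≤ j
        · left; norm_cast; omega
        · right; simp [hc]
      rw [coefC, p1, p2]
      rcases p3 with h3 | h3 <;> rw [h3] <;> simp

lemma coefC_top (N : ℕ) : ∀ m j : ℕ, 1 ≤ m → coefC N m m j = 0 := by
  intro m
  induction m with
  | zero => intro j h; omega
  | succ m ih =>
      intro j _
      have p1 : (if 1 ≤ j then coefC N m (m+1) (j-1) else 0) = 0 := by
        split_ifs with h1
        · exact coefC_support N m (m+1) (j-1) (by omega)
        · rfl
      have p2 : coefC N m m (j+1) = 0 := by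
        rcases Nat.eq_zero_or_pos m with hm | hm
        · subst hm; simp [coefC]
        · exact ih (j+1) hm
      rw [coefC, p1]
      simp only [Nat.add_sub_cancel, Nat.sub_self, Nat.zero_sub, Nat.cast_zero,
        zero_mul, mul_zero]
      simp [p2]

lemma coefC_zero_row (N : ℕ) : ∀ m j : ℕ, j ≠ m → coefC N m 0 j = 0 := by
  intro m
  induction m with
  | zero => intro j h; simp [coefC, h]
  | succ m ih =>
      intro j h
      have p1 : (if 1 ≤ j then coefC N m 0 (j-1) else 0) = 0 := by
        split_ifs with h1
        · exact ih (j-1) (by omega)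
        · rfl
      rw [coefC, p1]
      simp

lemma coefC_diag (N : ℕ) : ∀ m : ℕ, m ≤ N →
    coefC N m 0 m = (((∏ k ∈ Finset.range m, ((N - k : ℝ)/((N:ℝ)+1))) : ℝ) : ℂ) := by
  intro m
  induction m with
  | zero => intro _; simp [coefC]
  | succ m ih =>
      intro hmN
      have hrec : coefC N (m+1) 0 (m+1)
          = ((N - m : ℕ) : ℂ) * coefC N m 0 m / ((N : ℂ) + 1) := by
        rw [coefC]
        simp
      rw [hrec, ih (by omega), Finset.prod_range_succ]
      have hcast : ((N - m : ℕ) : ℂ) = (((N - m : ℝ) : ℝ) : ℂ) := by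
        push_cast [Nat.cast_sub (by omega : m ≤ N)]; ring
      rw [hcast]
      push_cast
      ring

lemma coefC_bound (N : ℕ) : ∀ m : ℕ, m ≤ N → ∀ ℓ j : ℕ,
    ‖coefC N m ℓ j‖ ≤ 3^m ∧
    (1 ≤ ℓ → ‖coefC N m ℓ j‖ ≤ 3^m * m / ((N:ℝ)+1)) := by
  intro m
  induction m with
  | zero =>
      intro _ ℓ j
      constructor
      · simp only [coefC, pow_zero]
        split_ifs <;> simp
      · intro hℓ
        have : ¬(ℓ = 0 ∧ j = 0) := by omega
        simp [coefC, this]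
  | succ m ih =>
      intro hmN ℓ j
      have hmN' : m ≤ N := by omega
      have hN1 : (0:ℝ) < (N:ℝ) + 1 := by positivity
      -- bounds on the three pieces
      have e1 : ‖((N - m + ℓ : ℕ) : ℂ) * (if 1 ≤ j then coefC N m ℓ (j-1) else 0)‖
          ≤ ((N:ℝ)+1) * 3^m := by
        split_ifs with h1
        · by_cases hs : m < ℓ + (j-1)
          · rw [coefC_support N m ℓ (j-1) hs]
            simp only [mul_zero, norm_zero]
            positivity
          · rw [norm_mul, Complex.norm_natCast]
            have hf : ((N - m + ℓ : ℕ) : ℝ) ≤ (N:ℝ)+1 := by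
              have : (N - m + ℓ : ℕ) ≤ N + 1 := by omega
              exact_mod_cast this
            exact mul_le_mul hf ((ih hmN' ℓ (j-1)).1) (norm_nonneg _) (by positivity)
        · simp only [mul_zero, norm_zero]
          positivity
      have e1' : 1 ≤ ℓ → ‖((N - m + ℓ : ℕ) : ℂ) * (if 1 ≤ j then coefC N m ℓ (j-1) else 0)‖
          ≤ 3^m * m := by
        intro hℓ
        split_ifs with h1
        · by_cases hs : m < ℓ + (j-1)
          · rw [coefC_support N m ℓ (j-1) hs]
            simp only [mul_zero, norm_zero]
            positivity
          · rw [norm_mul, Complex.norm_natCast]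
            have hf : ((N - m + ℓ : ℕ) : ℝ) ≤ (N:ℝ)+1 := by
              have : (N - m + ℓ : ℕ) ≤ N + 1 := by omega
              exact_mod_cast this
            calc ((N - m + ℓ : ℕ) : ℝ) * ‖coefC N m ℓ (j-1)‖
                ≤ ((N:ℝ)+1) * (3^m * m / ((N:ℝ)+1)) :=
                  mul_le_mul hf ((ih hmN' ℓ (j-1)).2 hℓ) (norm_nonneg _) (by positivity)
              _ = 3^m * m := by field_simp
        · simp only [mul_zero, norm_zero]
          positivity
      have e2 : ‖((j : ℂ) + 1) * (if 1 ≤ ℓ then coefC N m (ℓ-1) (j+1) else 0)‖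
          ≤ 3^m * m := by
        split_ifs with h1
        · by_cases hs : m < (ℓ-1) + (j+1)
          · rw [coefC_support N m (ℓ-1) (j+1) hs]
            simp only [mul_zero, norm_zero]
            positivity
          · rw [norm_mul]
            have habs : ‖(j:ℂ)+1‖ = (j:ℝ)+1 := by
              rw [show ((j:ℂ)+1) = (((j:ℝ)+1 : ℝ) : ℂ) by push_cast; ring,
                Complex.norm_real, Real.norm_eq_abs, abs_of_nonneg (by positivity)]
            rw [habs]
            have hj : (j:ℝ)+1 ≤ (m:ℝ) := by
              have : j + 1 ≤ m := by omega
              exact_mod_cast this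
            calc ((j:ℝ)+1) * ‖coefC N m (ℓ-1) (j+1)‖
                ≤ (m:ℝ) * 3^m := mul_le_mul hj ((ih hmN' (ℓ-1) (j+1)).1)
                  (norm_nonneg _) (by positivity)
              _ = 3^m * m := by ring
        · simp only [mul_zero, norm_zero]
          positivity
      have e3 : ‖((m - (ℓ-1) - (j-1) : ℕ) : ℂ) * (if 1 ≤ ℓ ∧ 1 ≤ j then coefC N m (ℓ-1) (j-1) else 0)‖
          ≤ 3^m * m := by
        split_ifs with h1
        · rw [norm_mul, Complex.norm_natCast]
          have hf : ((m - (ℓ-1) - (j-1) : ℕ) : ℝ) ≤ (m:ℝ) := by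
            have : (m - (ℓ-1) - (j-1) : ℕ) ≤ m := by omega
            exact_mod_cast this
          calc ((m - (ℓ-1) - (j-1) : ℕ) : ℝ) * ‖coefC N m (ℓ-1) (j-1)‖
              ≤ (m:ℝ) * 3^m := mul_le_mul hf ((ih hmN' (ℓ-1) (j-1)).1)
                (norm_nonneg _) (by positivity)
            _ = 3^m * m := by ring
        · simp only [mul_zero, norm_zero]
          positivity
      have habsden : ‖(N:ℂ)+1‖ = (N:ℝ)+1 := by
        rw [show ((N:ℂ)+1) = (((N:ℝ)+1 : ℝ) : ℂ) by push_cast; ring,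
          Complex.norm_real, Real.norm_eq_abs, abs_of_nonneg (by positivity)]
      have htri : ∀ x y z : ℂ, ‖x - y + z‖ ≤
          ‖x‖ + ‖y‖ + ‖z‖ := by
        intro x y z
        calc ‖x - y + z‖ ≤ ‖x - y‖ + ‖z‖ :=
              norm_add_le _ _
          _ ≤ ‖x‖ + ‖y‖ + ‖z‖ := by
              have h := norm_add_le x (-y)
              rw [sub_eq_add_neg]
              simp only [norm_neg] at h
              linarith
      have habs : ‖coefC N (m+1) ℓ j‖
          = ‖(((N - m + ℓ : ℕ) : ℂ) * (if 1 ≤ j then coefC N m ℓ (j-1) else 0)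
            - ((j : ℂ) + 1) * (if 1 ≤ ℓ then coefC N m (ℓ-1) (j+1) else 0)
            + ((m - (ℓ-1) - (j-1) : ℕ) : ℂ) * (if 1 ≤ ℓ ∧ 1 ≤ j then coefC N m (ℓ-1) (j-1) else 0))‖
            / ((N:ℝ)+1) := by
        rw [coefC, norm_div, habsden]
      have h3m : (0:ℝ) < 3^m := by positivity
      have hmR : (m:ℝ) ≤ (N:ℝ) := by exact_mod_cast (by omega : m ≤ N)
      have hm0 : (0:ℝ) ≤ (m:ℝ) := by positivity
      constructor
      · rw [habs, div_le_iff₀ hN1]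
        calc ‖_‖ ≤ ((N:ℝ)+1) * 3^m + 3^m * m + 3^m * m :=
              le_trans (htri _ _ _) (by linarith [e1, e2, e3])
          _ ≤ 3^(m+1) * ((N:ℝ)+1) := by
              rw [pow_succ]
              nlinarith
      · intro hℓ
        rw [habs]
        gcongr ?_ / _
        calc ‖_‖ ≤ 3^m * m + 3^m * m + 3^m * m :=
              le_trans (htri _ _ _) (by linarith [e1' hℓ, e2, e3])
          _ ≤ 3^(m+1) * ((m+1:ℕ):ℝ) := by
              push_cast
              rw [pow_succ]
              nlinarith



lemma L3tilde_sum {ι : Type} (u : Finset ι) (f : ι → (Fin 3 → ℝ) → ℂ) (p : Fin 3 → ℝ)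
    (hf : ∀ i ∈ u, DifferentiableAt ℝ (f i) p) :
    L3tilde (fun q => ∑ i ∈ u, f i q) p = ∑ i ∈ u, L3tilde (f i) p := by
  unfold L3tilde
  rw [fderiv_fun_sum hf, ContinuousLinearMap.sum_apply, ContinuousLinearMap.sum_apply,
    Finset.mul_sum, Finset.mul_sum, ← Finset.sum_sub_distrib, Finset.mul_sum]

lemma L3tilde_const_mul (c : ℂ) (g : (Fin 3 → ℝ) → ℂ) (p : Fin 3 → ℝ)
    (hg : DifferentiableAt ℝ g p) :
    L3tilde (fun q => c * g q) p = c * L3tilde g p := by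
  unfold L3tilde
  rw [fderiv_const_mul hg c]
  simp only [ContinuousLinearMap.coe_smul', Pi.smul_apply, smul_eq_mul]
  ring

noncomputable def SS (α : Fin 4 → ℂ) (N t : ℕ) : (Fin 3 → ℝ) → ℂ := fun p =>
  ∑ ℓ ∈ Finset.range (t+1), ∑ j ∈ Finset.range (t+1),
    coefC N t ℓ j * Tf α (t+2-ℓ) (N-t+ℓ) j (t-ℓ-j) p

lemma differentiable_SS (α : Fin 4 → ℂ) (N t : ℕ) : Differentiable ℝ (SS α N t) := by
  unfold SS
  apply Differentiable.fun_sum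
  intro ℓ _
  apply Differentiable.fun_sum
  intro j _
  exact (differentiable_Tf α _ _ _ _).const_mul _

lemma shift_sum (n : ℕ) (f : ℕ → ℂ) (hf : f 0 = 0) :
    ∑ i ∈ Finset.range (n+1), f i = ∑ i ∈ Finset.range n, f (i+1) := by
  rw [Finset.sum_range_succ']
  simp [hf]

lemma trunc_sum (n k : ℕ) (hkn : k ≤ n) (f : ℕ → ℂ)
    (hf : ∀ i, k ≤ i → i < n → f i = 0) :
    ∑ i ∈ Finset.range n, f i = ∑ i ∈ Finset.range k, f i :=
  (Finset.sum_subset (Finset.range_subset_range.2 hkn) (by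
    intro i hi hni
    simp only [Finset.mem_range] at hi hni
    exact hf i (by omega) hi)).symm

lemma step (α : Fin 4 → ℂ) (N t : ℕ) (ht : t < N) (p : Fin 3 → ℝ) :
    ((N:ℂ)+1)⁻¹ * L3tilde (SS α N t) p = -Complex.I * SS α N (t+1) p := by
  -- expand LHS via linearity
  have hL : L3tilde (SS α N t) p = ∑ ℓ ∈ Finset.range (t+1), ∑ j ∈ Finset.range (t+1),
      coefC N t ℓ j * L3tilde (Tf α (t+2-ℓ) (N-t+ℓ) j (t-ℓ-j)) p := by
    unfold SS
    rw [L3tilde_sum]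
    · apply Finset.sum_congr rfl
      intro ℓ _
      rw [L3tilde_sum]
      · apply Finset.sum_congr rfl
        intro j _
        exact L3tilde_const_mul _ _ _ ((differentiable_Tf α _ _ _ _) p)
      · intro j _
        exact ((differentiable_Tf α _ _ _ _).const_mul _) p
    · intro ℓ _
      apply DifferentiableAt.fun_sum
      intro j _
      exact ((differentiable_Tf α _ _ _ _).const_mul _) p
  rw [hL]
  -- common form
  have hcommon : ((N:ℂ)+1)⁻¹ * (∑ ℓ ∈ Finset.range (t+1), ∑ j ∈ Finset.range (t+1),
      coefC N t ℓ j * L3tilde (Tf α (t+2-ℓ) (N-t+ℓ) j (t-ℓ-j)) p)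
    = -Complex.I * (
      (∑ ℓ ∈ Finset.range (t+1), ∑ j ∈ Finset.range (t+1),
        coefC N t ℓ j * (((N-t+ℓ : ℕ):ℂ) * Tf α (t+3-ℓ) (N-t-1+ℓ) (j+1) (t-ℓ-j) p) / ((N:ℂ)+1))
      - (∑ ℓ ∈ Finset.range (t+1), ∑ j ∈ Finset.range (t+1),
        coefC N t ℓ j * ((j:ℂ) * Tf α (t+2-ℓ) (N-t+ℓ) (j-1) (t-ℓ-j+1) p) / ((N:ℂ)+1))
      + (∑ ℓ ∈ Finset.range (t+1), ∑ j ∈ Finset.range (t+1),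
        coefC N t ℓ j * (((t-ℓ-j : ℕ):ℂ) * Tf α (t+2-ℓ) (N-t+ℓ) (j+1) (t-ℓ-j-1) p) / ((N:ℂ)+1))) := by
    rw [Finset.mul_sum, ← Finset.sum_sub_distrib, ← Finset.sum_add_distrib, Finset.mul_sum]
    apply Finset.sum_congr rfl
    intro ℓ hℓ
    rw [Finset.mul_sum, ← Finset.sum_sub_distrib, ← Finset.sum_add_distrib, Finset.mul_sum]
    apply Finset.sum_congr rfl
    intro j hj
    have hℓt : ℓ ≤ t := by simpa [Nat.lt_succ_iff] using hℓ
    rw [L3tilde_Tf]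
    have ek : t+2-ℓ+1 = t+3-ℓ := by omega
    have ea : N-t+ℓ-1 = N-t-1+ℓ := by omega
    rw [ek, ea]
    ring
  rw [hcommon]
  congr 1
  -- now: common = SS α N (t+1) p, expanded via the recurrence
  unfold SS
  have hexp : ∀ ℓ' j' : ℕ, coefC N (t+1) ℓ' j' * Tf α (t+1+2-ℓ') (N-(t+1)+ℓ') j' (t+1-ℓ'-j') p
      = ((N - t + ℓ' : ℕ) : ℂ) * (if 1 ≤ j' then coefC N t ℓ' (j'-1) else 0)
          * Tf α (t+3-ℓ') (N-t-1+ℓ') j' (t+1-ℓ'-j') p / ((N:ℂ)+1)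
        - ((j' : ℂ) + 1) * (if 1 ≤ ℓ' then coefC N t (ℓ'-1) (j'+1) else 0)
          * Tf α (t+3-ℓ') (N-t-1+ℓ') j' (t+1-ℓ'-j') p / ((N:ℂ)+1)
        + ((t - (ℓ'-1) - (j'-1) : ℕ) : ℂ) * (if 1 ≤ ℓ' ∧ 1 ≤ j' then coefC N t (ℓ'-1) (j'-1) else 0)
          * Tf α (t+3-ℓ') (N-t-1+ℓ') j' (t+1-ℓ'-j') p / ((N:ℂ)+1) := by
    intro ℓ' j'
    have ek : t+1+2-ℓ' = t+3-ℓ' := by omega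
    have ea : N-(t+1)+ℓ' = N-t-1+ℓ' := by omega
    rw [ek, ea, coefC]
    ring
  rw [show (∑ ℓ ∈ Finset.range (t+1+1), ∑ j ∈ Finset.range (t+1+1),
      coefC N (t+1) ℓ j * Tf α (t+1+2-ℓ) (N-(t+1)+ℓ) j (t+1-ℓ-j) p)
    = ∑ ℓ' ∈ Finset.range (t+2), ∑ j' ∈ Finset.range (t+2),
      (((N - t + ℓ' : ℕ) : ℂ) * (if 1 ≤ j' then coefC N t ℓ' (j'-1) else 0)
          * Tf α (t+3-ℓ') (N-t-1+ℓ') j' (t+1-ℓ'-j') p / ((N:ℂ)+1)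
        - ((j' : ℂ) + 1) * (if 1 ≤ ℓ' then coefC N t (ℓ'-1) (j'+1) else 0)
          * Tf α (t+3-ℓ') (N-t-1+ℓ') j' (t+1-ℓ'-j') p / ((N:ℂ)+1)
        + ((t - (ℓ'-1) - (j'-1) : ℕ) : ℂ) * (if 1 ≤ ℓ' ∧ 1 ≤ j' then coefC N t (ℓ'-1) (j'-1) else 0)
          * Tf α (t+3-ℓ') (N-t-1+ℓ') j' (t+1-ℓ'-j') p / ((N:ℂ)+1)) from by
    apply Finset.sum_congr rfl
    intro ℓ' _
    apply Finset.sum_congr rfl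
    intro j' _
    exact hexp ℓ' j']
  simp only [Finset.sum_add_distrib, Finset.sum_sub_distrib]
  congr 1
  · congr 1
    -- I1
    · symm
      rw [trunc_sum (t+1+1) (t+1) (by omega)]
      · apply Finset.sum_congr rfl
        intro ℓ hℓ
        rw [shift_sum (t+1)]
        · apply Finset.sum_congr rfl
          intro j hj
          rw [if_pos (by omega : 1 ≤ j+1)]
          simp only [Nat.add_sub_cancel]
          have e1 : t+1-ℓ-(j+1) = t-ℓ-j := by omega
          rw [e1]
          ring
        · simp
      · intro i hi1 hi2
        apply Finset.sum_eq_zero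
        intro j' _
        split_ifs with h
        · rw [coefC_support N t i (j'-1) (by omega)]; ring
        · ring
    -- I2
    · symm
      rw [shift_sum (t+1)]
      · apply Finset.sum_congr rfl
        intro ℓ hℓ
        have hℓt : ℓ < t + 1 := by simpa using hℓ
        rw [trunc_sum (t+1+1) t (by omega), shift_sum t]
        · apply Finset.sum_congr rfl
          intro i hi
          simp only [if_pos (by omega : 1 ≤ ℓ+1), Nat.add_sub_cancel]
          by_cases hc : ℓ + (i+1) ≤ t
          · have e1 : t+3-(ℓ+1) = t+2-ℓ := by omega
            have e2 : N-t-1+(ℓ+1) = N-t+ℓ := by omega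
            have e3 : t+1-(ℓ+1)-i = t-ℓ-(i+1)+1 := by omega
            rw [e1, e2, e3]
            push_cast
            ring
          · rw [coefC_support N t ℓ (i+1) (by omega)]
            ring
        · simp
        · intro i hi1 hi2
          rw [if_pos (by omega : 1 ≤ ℓ+1)]
          simp only [Nat.add_sub_cancel]
          rw [coefC_support N t ℓ (i+1) (by omega)]
          ring
      · apply Finset.sum_eq_zero
        intro j' _
        simp
  -- I3
  · symm
    rw [shift_sum (t+1)]
    · apply Finset.sum_congr rfl
      intro ℓ hℓ
      rw [shift_sum (t+1)]
      · apply Finset.sum_congr rfl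
        intro i hi
        rw [if_pos (by omega : 1 ≤ ℓ+1 ∧ 1 ≤ i+1)]
        simp only [Nat.add_sub_cancel]
        have e1 : t+3-(ℓ+1) = t+2-ℓ := by omega
        have e2 : N-t-1+(ℓ+1) = N-t+ℓ := by omega
        have e3 : t+1-(ℓ+1)-(i+1) = t-ℓ-i-1 := by omega
        rw [e1, e2, e3]
        ring
      · simp
    · apply Finset.sum_eq_zero
      intro j' _
      simp

lemma rhoC_coe (p : Fin 3 → ℝ) : ((2/(normSq3 p + 1) : ℝ) : ℂ) = rhoC p := by
  unfold rhoC nC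
  push_cast
  ring

lemma invariant (α : Fin 4 → ℂ) (N : ℕ) : ∀ t, t ≤ N →
    ((fun g : (Fin 3 → ℝ) → ℂ => fun q => ((N : ℂ) + 1)⁻¹ * L3tilde g q)^[t]
      (fun q => ((2 / (normSq3 q + 1) : ℝ) : ℂ) ^ 2 * adotom α q ^ N))
    = fun p => (-Complex.I)^t * SS α N t p := by
  intro t
  induction t with
  | zero =>
      intro _
      funext p
      simp only [Function.iterate_zero, id_eq, pow_zero, one_mul, SS]
      norm_num [Finset.sum_range_one]
      rw [show coefC N 0 0 0 = 1 by simp [coefC], Tf,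
        show (2 / ((normSq3 p : ℂ) + 1)) = rhoC p from rfl]
      norm_num
  | succ t ih =>
      intro ht1
      have htN : t ≤ N := le_trans (Nat.le_succ t) ht1
      rw [Function.iterate_succ_apply', ih htN]
      funext p
      show ((N:ℂ)+1)⁻¹ * L3tilde (fun q => (-Complex.I)^t * SS α N t q) p
          = (-Complex.I)^(t+1) * SS α N (t+1) p
      rw [L3tilde_const_mul _ _ _ (differentiable_SS α N t p)]
      calc ((N:ℂ)+1)⁻¹ * ((-Complex.I)^t * L3tilde (SS α N t) p)
          = (-Complex.I)^t * (((N:ℂ)+1)⁻¹ * L3tilde (SS α N t) p) := by ring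
        _ = (-Complex.I)^t * (-Complex.I * SS α N (t+1) p) := by
            rw [step α N t (by omega) p]
        _ = (-Complex.I)^(t+1) * SS α N (t+1) p := by rw [pow_succ]; ring

lemma one_sub_prod_le (f : ℕ → ℝ) : ∀ m : ℕ, (∀ k, k < m → 0 ≤ f k) → (∀ k, k < m → f k ≤ 1) →
    1 - ∏ k ∈ Finset.range m, f k ≤ ∑ k ∈ Finset.range m, (1 - f k) := by
  intro m
  induction m with
  | zero => intro _ _; simp
  | succ m ih =>
      intro h0 h1
      rw [Finset.prod_range_succ, Finset.sum_range_succ]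
      have hP0 : 0 ≤ ∏ k ∈ Finset.range m, f k :=
        Finset.prod_nonneg (fun k hk => h0 k (by simpa using Finset.mem_range.1 hk |>.trans (Nat.lt_succ_self m)))
      have hP1 : (∏ k ∈ Finset.range m, f k) ≤ 1 :=
        Finset.prod_le_one (fun k hk => h0 k ((Finset.mem_range.1 hk).trans (Nat.lt_succ_self m)))
          (fun k hk => h1 k ((Finset.mem_range.1 hk).trans (Nat.lt_succ_self m)))
      have hih := ih (fun k hk => h0 k (hk.trans (Nat.lt_succ_self m)))
        (fun k hk => h1 k (hk.trans (Nat.lt_succ_self m)))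
      nlinarith [h0 m (Nat.lt_succ_self m), h1 m (Nat.lt_succ_self m)]

lemma SS_final (α : Fin 4 → ℂ) (N m : ℕ) (hm : 1 ≤ m) (hmN : m ≤ N) (p : Fin 3 → ℝ) :
    SS α N m p = (BF α p ^ m + ∑ ℓ ∈ Finset.range m, ∑ j ∈ Finset.range (m-ℓ+1),
        (coefC N m ℓ j - if ℓ = 0 ∧ j = m then 1 else 0) * BF α p ^ j * AF α p ^ (m-ℓ-j)
          * (((normSq3 p + 1)/2 : ℝ) : ℂ)^ℓ * adotom α p ^ ℓ)
      * ((2/(normSq3 p + 1) : ℝ) : ℂ)^(m+2) * adotom α p ^ (N-m) := by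
  have hinv : rhoC p * (((normSq3 p + 1)/2 : ℝ) : ℂ) = 1 := by
    have h1 : ((normSq3 p + 1 : ℝ) : ℂ) ≠ 0 := by
      rw [Complex.ofReal_ne_zero]
      have := normSq3_nonneg p
      linarith
    have h2 : ((normSq3 p : ℂ) + 1) ≠ 0 := by
      rw [show ((normSq3 p : ℂ) + 1) = ((normSq3 p + 1 : ℝ) : ℂ) by push_cast; ring,
        Complex.ofReal_ne_zero]
      linarith [normSq3_nonneg p]
    unfold rhoC nC
    push_cast
    field_simp
  have hk : ∀ ℓ, ℓ ≤ m → rhoC p ^ (m+2-ℓ)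
      = rhoC p ^ (m+2) * (((normSq3 p + 1)/2 : ℝ) : ℂ)^ℓ := by
    intro ℓ hℓ
    calc rhoC p ^ (m+2-ℓ)
        = rhoC p ^ (m+2-ℓ) * (rhoC p * (((normSq3 p + 1)/2 : ℝ) : ℂ))^ℓ := by
          rw [hinv, one_pow, mul_one]
      _ = rhoC p ^ (m+2) * (((normSq3 p + 1)/2 : ℝ) : ℂ)^ℓ := by
          rw [mul_pow, ← mul_assoc, ← pow_add, show m+2-ℓ+ℓ = m+2 by omega]
  -- step 1: drop the top row and truncate columns
  have h1 : SS α N m p = ∑ ℓ ∈ Finset.range m, ∑ j ∈ Finset.range (m-ℓ+1),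
      coefC N m ℓ j * Tf α (m+2-ℓ) (N-m+ℓ) j (m-ℓ-j) p := by
    unfold SS
    rw [Finset.sum_range_succ]
    have hz : (∑ j ∈ Finset.range (m+1),
        coefC N m m j * Tf α (m+2-m) (N-m+m) j (m-m-j) p) = 0 := by
      apply Finset.sum_eq_zero
      intro j _
      rw [coefC_top N m j hm]
      ring
    rw [hz, add_zero]
    apply Finset.sum_congr rfl
    intro ℓ hℓ
    have hℓm : ℓ < m := Finset.mem_range.1 hℓ
    rw [trunc_sum (m+1) (m-ℓ+1) (by omega)]
    intro j hj1 hj2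
    rw [coefC_support N m ℓ j (by omega)]
    ring
  rw [h1, rhoC_coe]
  -- step 2: algebraic regrouping of the RHS
  have hδ : (∑ ℓ ∈ Finset.range m, ∑ j ∈ Finset.range (m-ℓ+1),
      (if ℓ = 0 ∧ j = m then (1:ℂ) else 0) * BF α p ^ j * AF α p ^ (m-ℓ-j)
        * (((normSq3 p + 1)/2 : ℝ) : ℂ)^ℓ * adotom α p ^ ℓ) = BF α p ^ m := by
    rw [Finset.sum_eq_single_of_mem 0 (Finset.mem_range.2 hm)]
    · rw [Finset.sum_eq_single_of_mem m (Finset.mem_range.2 (by omega))]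
      · simp
      · intro b _ hbm
        simp [hbm]
    · intro b _ hb0
      apply Finset.sum_eq_zero
      intro j _
      simp [hb0]
  -- expand and cancel
  simp only [sub_mul, Finset.sum_sub_distrib]
  rw [hδ]
  rw [add_sub_cancel]
  rw [Finset.sum_mul, Finset.sum_mul]
  apply Finset.sum_congr rfl
  intro ℓ hℓ
  rw [Finset.sum_mul, Finset.sum_mul]
  apply Finset.sum_congr rfl
  intro j hj
  have hℓm : ℓ < m := Finset.mem_range.1 hℓ
  rw [Tf, hk ℓ (by omega), show N-m+ℓ = (N-m)+ℓ from rfl, pow_add]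
  ring

end S11

/-- the `m`-fold iterate of `(N+1)⁻¹L̃₃` on
`F_N(p) = (2/(|p|²+1))²(α·ω(p))^N` has the stated form, with coefficients
`C_{N,m,ℓ,j}` independent of `α` and of size `O(N⁻¹)` uniformly. -/

theorem stmt11 (m : ℕ) (hm : 1 ≤ m) :
    ∃ K > 0, ∀ N : ℕ, m ≤ N → ∃ C : ℕ → ℕ → ℂ,
      (∀ ℓ j : ℕ, ℓ < m → j ≤ m - ℓ → ‖C ℓ j‖ ≤ K / N) ∧
      ∀ α : Fin 4 → ℂ, memA α → ∀ p : Fin 3 → ℝ,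
        ((fun g : (Fin 3 → ℝ) → ℂ => fun q => ((N : ℂ) + 1)⁻¹ * L3tilde g q)^[m]
            (fun q => ((2 / (normSq3 q + 1) : ℝ) : ℂ) ^ 2 * adotom α q ^ N)) p =
          (-Complex.I) ^ m *
            ((α 0 * (p 1 : ℂ) - α 1 * (p 0 : ℂ)) ^ m +
              ∑ ℓ ∈ Finset.range m, ∑ j ∈ Finset.range (m - ℓ + 1),
                C ℓ j * (α 0 * (p 1 : ℂ) - α 1 * (p 0 : ℂ)) ^ j *
                  (α 0 * (p 0 : ℂ) + α 1 * (p 1 : ℂ)) ^ (m - ℓ - j) *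
                  (((normSq3 p + 1) / 2 : ℝ) : ℂ) ^ ℓ * adotom α p ^ ℓ) *
            ((2 / (normSq3 p + 1) : ℝ) : ℂ) ^ (m + 2) * adotom α p ^ (N - m) := by
  have hmR : (1:ℝ) ≤ (m:ℝ) := by exact_mod_cast hm
  have h3 : (0:ℝ) < 3^m := by positivity
  refine ⟨3^m * m + m^2, by nlinarith, ?_⟩
  intro N hmN
  refine ⟨fun ℓ j => S11.coefC N m ℓ j - if ℓ = 0 ∧ j = m then 1 else 0, ?_, ?_⟩
  · intro ℓ j hℓ hj
    have hN1 : (1:ℕ) ≤ N := le_trans hm hmN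
    have hNR : (0:ℝ) < (N:ℝ) := by exact_mod_cast hN1
    have hNR1 : (0:ℝ) < (N:ℝ) + 1 := by positivity
    simp only []
    by_cases hℓ0 : ℓ = 0
    · subst hℓ0
      by_cases hjm : j = m
      · rw [hjm, if_pos ⟨rfl, rfl⟩, S11.coefC_diag N m hmN]
        set P : ℝ := ∏ k ∈ Finset.range m, (((N:ℝ) - k)/((N:ℝ)+1)) with hP
        have hfk0 : ∀ k, k < m → 0 ≤ ((N:ℝ) - k)/((N:ℝ)+1) := by
          intro k hk
          have : (k:ℝ) ≤ (N:ℝ) := by exact_mod_cast (by omega : k ≤ N)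
          apply div_nonneg <;> linarith
        have hfk1 : ∀ k, k < m → ((N:ℝ) - k)/((N:ℝ)+1) ≤ 1 := by
          intro k hk
          rw [div_le_one hNR1]
          have : (0:ℝ) ≤ (k:ℝ) := by positivity
          linarith
        have hP0 : 0 ≤ P := Finset.prod_nonneg (fun k hk => hfk0 k (Finset.mem_range.1 hk))
        have hP1 : P ≤ 1 := Finset.prod_le_one (fun k hk => hfk0 k (Finset.mem_range.1 hk))
          (fun k hk => hfk1 k (Finset.mem_range.1 hk))
        have habs : ‖((P:ℝ):ℂ) - 1‖ = 1 - P := by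
          rw [show ((P:ℝ):ℂ) - 1 = (((P - 1 : ℝ)):ℂ) by push_cast; ring, Complex.norm_real, Real.norm_eq_abs,
            abs_of_nonpos (by linarith), neg_sub]
        rw [habs]
        have hsum := S11.one_sub_prod_le (fun k => ((N:ℝ) - k)/((N:ℝ)+1)) m hfk0 hfk1
        have hterm : ∀ k, k < m → 1 - ((N:ℝ) - k)/((N:ℝ)+1) ≤ (m:ℝ)/(N:ℝ) := by
          intro k hk
          have hkm : (k:ℝ) + 1 ≤ (m:ℝ) := by exact_mod_cast (by omega : k + 1 ≤ m)
          have he : 1 - ((N:ℝ) - k)/((N:ℝ)+1) = ((k:ℝ)+1)/((N:ℝ)+1) := by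
            field_simp
            ring
          rw [he, div_le_div_iff₀ hNR1 hNR]
          nlinarith
        calc 1 - P ≤ ∑ k ∈ Finset.range m, (1 - ((N:ℝ) - k)/((N:ℝ)+1)) := hsum
          _ ≤ ∑ _k ∈ Finset.range m, (m:ℝ)/(N:ℝ) := by
              apply Finset.sum_le_sum
              intro k hk
              exact hterm k (Finset.mem_range.1 hk)
          _ = (m:ℝ) * ((m:ℝ)/(N:ℝ)) := by
              rw [Finset.sum_const, Finset.card_range, nsmul_eq_mul]
          _ = ((m:ℝ) * m)/(N:ℝ) := by ring
          _ ≤ (3^m * m + m^2)/(N:ℝ) := by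
              gcongr
              nlinarith
      · rw [if_neg (by simp [hjm]), S11.coefC_zero_row N m j hjm]
        simp only [sub_zero, norm_zero]
        positivity
    · rw [if_neg (by simp [hℓ0]), sub_zero]
      have hb := (S11.coefC_bound N m hmN ℓ j).2 (by omega)
      calc ‖S11.coefC N m ℓ j‖ ≤ 3^m * m / ((N:ℝ)+1) := hb
        _ ≤ 3^m * m / (N:ℝ) := by
            gcongr
            all_goals first | positivity | linarith
        _ ≤ (3^m * m + m^2)/(N:ℝ) := by
            gcongr
            nlinarith [sq_nonneg (m:ℝ)]
  · intro α _ p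
    rw [S11.invariant α N m hmN]
    show (-Complex.I)^m * S11.SS α N m p = _
    rw [S11.SS_final α N m hm hmN p]
    simp only [S11.BF, S11.AF]
    ring
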